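/- Let n ≥ 1 and let f : 𝔽₂^{2n} → 𝔽₂ be a bent function, i.e., |∑_{x ∈ 𝔽₂^{2n}} (−1)^{f(x) + w·x}| = 2^n for every w ∈ 𝔽₂^{2n}, where w·x denotes the standard inner product over 𝔽₂. Suppose in addition that |f⁻¹(1)| = 2^{2n−1} − 2^{n−1}. Then D := f⁻¹(1) is a (2^{2n}, 2^{2n−1}−2^{n−1}, 2^{2n−2}−2^{n−1})-difference set in the additive group 𝔽₂^{2n}: for every nonzero a ∈ 𝔽₂^{2n}, the number of ordered pairs (x,y) ∈ D×D with x+y = a equals 2^{2n−2}−2^{n−1}. -/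

import Mathlib

open Finset

private lemma negOnePowMod (k : ℕ) : (-1:ℝ)^(k % 2) = (-1:ℝ)^k := by
  conv_rhs => rw [← Nat.div_add_mod k 2]
  rw [pow_add, pow_mul]
  norm_num

private lemma powValAdd (a b : ZMod 2) :
    (-1:ℝ)^((a+b).val) = (-1:ℝ)^a.val * (-1:ℝ)^b.val := by
  rw [ZMod.val_add, negOnePowMod, pow_add]

private lemma zmod2_add_self : ∀ a : ZMod 2, a + a = 0 := by decide

private lemma vec_add_self {m : ℕ} (x : Fin m → ZMod 2) : x + x = 0 := by
  funext i; exact zmod2_add_self (x i)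

private lemma char_sum_zero {m : ℕ} {w : Fin m → ZMod 2} (hw : w ≠ 0) :
    ∑ x : Fin m → ZMod 2, (-1:ℝ)^((∑ i, w i * x i).val) = 0 := by
  obtain ⟨i, hi⟩ : ∃ i, w i ≠ 0 := by
    by_contra h; push_neg at h; exact hw (funext h)
  have hwi : w i = 1 := by
    have : ∀ a : ZMod 2, a ≠ 0 → a = 1 := by decide
    exact this _ hi
  have key : ∀ x : Fin m → ZMod 2,
      (-1:ℝ)^((∑ j, w j * (x + (Pi.single i 1 : Fin m → ZMod 2)) j).val)
        = - (-1:ℝ)^((∑ j, w j * x j).val) := by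
    intro x
    have h1 : ∑ j, w j * (x + (Pi.single i 1 : Fin m → ZMod 2)) j = (∑ j, w j * x j) + 1 := by
      have : ∀ j, w j * (x + (Pi.single i 1 : Fin m → ZMod 2)) j = w j * x j + w j * (Pi.single i 1 : Fin m → ZMod 2) j := by
        intro j; simp [mul_add]
      rw [Finset.sum_congr rfl fun j _ => this j, Finset.sum_add_distrib]
      congr 1
      rw [Finset.sum_eq_single i]
      · simp [hwi]
      · intro j _ hj; simp [Pi.single_eq_of_ne hj]
      · simp
    rw [h1, powValAdd]
    simp [ZMod.val_one]
  have hsum : ∑ x : Fin m → ZMod 2, (-1:ℝ)^((∑ j, w j * x j).val)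
      = ∑ x : Fin m → ZMod 2, (-1:ℝ)^((∑ j, w j * (x + (Pi.single i 1 : Fin m → ZMod 2)) j).val) :=
    (Fintype.sum_equiv (Equiv.addRight ((Pi.single i 1 : Fin m → ZMod 2)))
      (fun x => (-1:ℝ)^((∑ j, w j * (x + (Pi.single i 1 : Fin m → ZMod 2)) j).val))
      (fun x => (-1:ℝ)^((∑ j, w j * x j).val)) (fun x => rfl)).symm
  have := hsum
  rw [Finset.sum_congr rfl fun x _ => key x, Finset.sum_neg_distrib] at this
  linarith

private lemma char_sum_all {m : ℕ} (w : Fin m → ZMod 2) :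
    ∑ x : Fin m → ZMod 2, (-1:ℝ)^((∑ i, w i * x i).val)
      = if w = 0 then 2^m else 0 := by
  by_cases hw : w = 0
  · subst hw
    simp [Fintype.card_fun, ZMod.val_zero]
  · rw [if_neg hw]; exact char_sum_zero hw

/-- Hadamard difference sets from bent functions: if `f : 𝔽₂^{2n} → 𝔽₂` is bent
(all Fourier coefficients have absolute value `2^n`) and `D = f⁻¹(1)` has
`2^{2n−1} − 2^{n−1}` elements, then `D` is a
`(2^{2n}, 2^{2n−1}−2^{n−1}, 2^{2n−2}−2^{n−1})`-difference set in `𝔽₂^{2n}`. -/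
theorem bent_function_difference_set
    (n : ℕ) (hn : 1 ≤ n)
    (f : (Fin (2 * n) → ZMod 2) → ZMod 2)
    (hbent : ∀ w : Fin (2 * n) → ZMod 2,
      |∑ x : Fin (2 * n) → ZMod 2, (-1 : ℝ) ^ (f x + ∑ i, w i * x i).val|
        = 2 ^ n)
    (D : Finset (Fin (2 * n) → ZMod 2))
    (hD : ∀ x, x ∈ D ↔ f x = 1)
    (hcard : D.card = 2 ^ (2 * n - 1) - 2 ^ (n - 1)) :
    ∀ a : Fin (2 * n) → ZMod 2, a ≠ 0 →
      ((D ×ˢ D).filter (fun p => p.1 + p.2 = a)).card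
        = 2 ^ (2 * n - 2) - 2 ^ (n - 1) := by
  intro a ha
  set F : (Fin (2 * n) → ZMod 2) → ℝ := fun x => (-1:ℝ)^((f x).val) with hF
  set χ : (Fin (2 * n) → ZMod 2) → (Fin (2 * n) → ZMod 2) → ℝ := fun w x => (-1:ℝ)^((∑ i, w i * x i).val) with hχ
  -- Fourier coefficients squared
  have hT : ∀ w : Fin (2 * n) → ZMod 2, (∑ x : Fin (2 * n) → ZMod 2, F x * χ w x) ^ 2 = 2^(2*n) := by
    intro w
    have h1 : ∑ x : Fin (2 * n) → ZMod 2, F x * χ w x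
        = ∑ x : Fin (2 * n) → ZMod 2, (-1:ℝ)^((f x + ∑ i, w i * x i).val) :=
      Finset.sum_congr rfl fun x _ => (powValAdd _ _).symm
    rw [h1, ← sq_abs, hbent w, ← pow_mul, Nat.mul_comm]
  -- multiplicativity of χ in second argument
  have hchi_add : ∀ (w x y : Fin (2 * n) → ZMod 2), χ w (x + y) = χ w x * χ w y := by
    intro w x y
    have h1 : ∑ i, w i * (x + y) i = (∑ i, w i * x i) + ∑ i, w i * y i := by
      rw [← Finset.sum_add_distrib]
      exact Finset.sum_congr rfl fun i _ => by simp [mul_add]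
    simp only [hχ]
    rw [h1, powValAdd]
  -- character sum over w
  have hchar_w : ∀ z : Fin (2 * n) → ZMod 2, ∑ w : Fin (2 * n) → ZMod 2, χ w z = if z = 0 then (2:ℝ)^(2*n) else 0 := by
    intro z
    have h1 : ∀ w : Fin (2 * n) → ZMod 2, χ w z = (-1:ℝ)^((∑ i, z i * w i).val) := by
      intro w
      simp only [hχ]
      congr 1
      exact congrArg _ (Finset.sum_congr rfl fun i _ => mul_comm _ _)
    rw [Finset.sum_congr rfl fun w _ => h1 w, char_sum_all]
  -- key identity and autocorrelation zero
  have hA : ∑ x : Fin (2 * n) → ZMod 2, F x * F (x + a) = 0 := by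
    have key : ∑ w : Fin (2 * n) → ZMod 2, (∑ x : Fin (2 * n) → ZMod 2, F x * χ w x)^2 * χ w a
        = (2:ℝ)^(2*n) * ∑ x : Fin (2 * n) → ZMod 2, F x * F (x + a) := by
      have expand : ∀ w : Fin (2 * n) → ZMod 2, (∑ x : Fin (2 * n) → ZMod 2, F x * χ w x)^2 * χ w a
          = ∑ x : Fin (2 * n) → ZMod 2, ∑ y : Fin (2 * n) → ZMod 2, F x * F y * χ w (x + y + a) := by
        intro w
        rw [sq, Finset.sum_mul_sum, Finset.sum_mul]
        refine Finset.sum_congr rfl fun x _ => ?_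
        rw [Finset.sum_mul]
        refine Finset.sum_congr rfl fun y _ => ?_
        rw [hchi_add, hchi_add]
        ring
      rw [Finset.sum_congr rfl fun w _ => expand w]
      rw [Finset.sum_comm]
      rw [Finset.mul_sum]
      refine Finset.sum_congr rfl fun x _ => ?_
      rw [Finset.sum_comm]
      have inner : ∀ y : Fin (2 * n) → ZMod 2, ∑ w : Fin (2 * n) → ZMod 2, F x * F y * χ w (x + y + a)
          = F x * F y * (if x + y + a = 0 then (2:ℝ)^(2*n) else 0) := by
        intro y
        rw [← Finset.mul_sum, hchar_w]
      rw [Finset.sum_congr rfl fun y _ => inner y]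
      have hcond : ∀ y : Fin (2 * n) → ZMod 2, (x + y + a = 0) ↔ (y = x + a) := by
        intro y
        constructor
        · intro h
          have := congrArg (fun z => x + a + z) h
          simp only [add_zero] at this
          rw [← this]
          rw [show x + a + (x + y + a) = (x + x) + (a + a) + y by ring]
          rw [vec_add_self, vec_add_self]
          rw [zero_add, zero_add]
        · intro h
          rw [h, show x + (x + a) + a = (x + x) + (a + a) by ring]
          rw [vec_add_self, vec_add_self, add_zero]
      rw [Finset.sum_congr rfl fun y _ => by rw [if_congr (hcond y) rfl rfl]]
      rw [Finset.sum_congr rfl fun y _ => (mul_ite _ _ _ _ : F x * F y * _ = _)]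
      simp only [mul_zero]
      rw [Finset.sum_ite_eq' Finset.univ (x + a) (fun y => F x * F y * (2:ℝ)^(2*n))]
      simp only [Finset.mem_univ, if_true]
      ring
    have lhs0 : ∑ w : Fin (2 * n) → ZMod 2, (∑ x : Fin (2 * n) → ZMod 2, F x * χ w x)^2 * χ w a = 0 := by
      rw [Finset.sum_congr rfl fun w _ => by rw [hT w]]
      rw [← Finset.mul_sum, hchar_w, if_neg ha, mul_zero]
    rw [lhs0] at key
    have h2 : (2:ℝ)^(2*n) ≠ 0 := by positivity
    field_simp at key
    exact (mul_eq_zero.mp key.symm).resolve_left h2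
  -- sum of F
  have hFx : ∀ x : Fin (2 * n) → ZMod 2, F x = if x ∈ D then (-1:ℝ) else 1 := by
    intro x
    by_cases h : x ∈ D
    · rw [if_pos h]
      have h1 : f x = 1 := (hD x).mp h
      simp [hF, h1, ZMod.val_one]
    · rw [if_neg h]
      have h1 : f x = 0 := by
        have h2 : f x ≠ 1 := fun hh => h ((hD x).mpr hh)
        have : ∀ b : ZMod 2, b ≠ 1 → b = 0 := by decide
        exact this _ h2
      simp [hF, h1]
  have hcardV : (Fintype.card (Fin (2 * n) → ZMod 2) : ℝ) = 2^(2*n) := by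
    simp [Fintype.card_fun]
  have hDcast : (D.card : ℝ) = 2^(2*n-1) - 2^(n-1) := by
    rw [hcard, Nat.cast_sub (Nat.pow_le_pow_right (by norm_num) (by omega))]
    push_cast
    ring
  have hS : ∑ x : Fin (2 * n) → ZMod 2, F x = 2^n := by
    have h1 : ∀ x : Fin (2 * n) → ZMod 2, F x = 1 - 2 * (if x ∈ D then (1:ℝ) else 0) := by
      intro x
      rw [hFx x]
      by_cases h : x ∈ D <;> simp [h] <;> norm_num
    rw [Finset.sum_congr rfl fun x _ => h1 x, Finset.sum_sub_distrib, ← Finset.mul_sum]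
    rw [Finset.sum_boole]
    have hfil : Finset.univ.filter (fun x : Fin (2 * n) → ZMod 2 => x ∈ D) = D := by
      ext x; simp
    rw [hfil]
    rw [Finset.sum_const, Finset.card_univ, nsmul_eq_mul, mul_one]
    rw [hcardV, hDcast]
    have e1 : 2*n = (2*n-1)+1 := by omega
    have e2 : n = (n-1)+1 := by omega
    rw [show (2:ℝ)^(2*n) = 2^((2*n-1)+1) by rw [← e1],
        show (2:ℝ)^n = 2^((n-1)+1) by rw [← e2]]
    rw [pow_succ, pow_succ]
    ring
  -- counting
  have hterm : ∀ x : Fin (2 * n) → ZMod 2, (1 - F x) * (1 - F (x + a))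
      = if x ∈ D ∧ x + a ∈ D then (4:ℝ) else 0 := by
    intro x
    rw [hFx x, hFx (x + a)]
    by_cases h1 : x ∈ D <;> by_cases h2 : x + a ∈ D <;> simp [h1, h2] <;> norm_num
  have hshift : ∑ x : Fin (2 * n) → ZMod 2, F (x + a) = ∑ x : Fin (2 * n) → ZMod 2, F x :=
    Fintype.sum_equiv (Equiv.addRight a) (fun x => F (x + a)) F (fun x => rfl)
  have hexpand : ∑ x : Fin (2 * n) → ZMod 2, (1 - F x) * (1 - F (x + a)) = 2^(2*n) - 2 * 2^n := by
    have h1 : ∀ x : Fin (2 * n) → ZMod 2, (1 - F x) * (1 - F (x + a))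
        = 1 - F x - F (x + a) + F x * F (x + a) := fun x => by ring
    rw [Finset.sum_congr rfl fun x _ => h1 x]
    rw [Finset.sum_add_distrib, Finset.sum_sub_distrib, Finset.sum_sub_distrib]
    rw [hshift, hA, hS, Finset.sum_const, Finset.card_univ, nsmul_eq_mul, mul_one]
    rw [hcardV]
    ring
  have hE : ((Finset.univ.filter (fun x : Fin (2 * n) → ZMod 2 => x ∈ D ∧ x + a ∈ D)).card : ℝ)
      = 2^(2*n-2) - 2^(n-1) := by
    have h1 : ∑ x : Fin (2 * n) → ZMod 2, (1 - F x) * (1 - F (x + a))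
        = 4 * ((Finset.univ.filter (fun x : Fin (2 * n) → ZMod 2 => x ∈ D ∧ x + a ∈ D)).card : ℝ) := by
      rw [Finset.sum_congr rfl fun x _ => hterm x, ← Finset.sum_filter,
        Finset.sum_const, nsmul_eq_mul]
      ring
    rw [hexpand] at h1
    have e1 : 2*n = (2*n-2)+2 := by omega
    have e2 : n = (n-1)+1 := by omega
    rw [show (2:ℝ)^(2*n) = 2^((2*n-2)+2) by rw [← e1],
        show (2:ℝ)^n = 2^((n-1)+1) by rw [← e2]] at h1
    rw [pow_succ, pow_succ, pow_succ] at h1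
    linarith
  have hbij : ((D ×ˢ D).filter (fun p => p.1 + p.2 = a)).card
      = (Finset.univ.filter (fun x : Fin (2 * n) → ZMod 2 => x ∈ D ∧ x + a ∈ D)).card := by
    apply Finset.card_bij (fun p _ => p.1)
    · intro p hp
      simp only [Finset.mem_filter, Finset.mem_product] at hp
      obtain ⟨⟨h1, h2⟩, h3⟩ := hp
      simp only [Finset.mem_filter, Finset.mem_univ, true_and]
      refine ⟨h1, ?_⟩
      have : p.1 + a = p.2 := by
        rw [← h3, show p.1 + (p.1 + p.2) = (p.1 + p.1) + p.2 by ring,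
          vec_add_self, zero_add]
      rw [this]; exact h2
    · intro p hp q hq hpq
      simp only [Finset.mem_filter, Finset.mem_product] at hp hq
      have h2 : p.2 = q.2 := by
        have e1 : p.2 = p.1 + a := by
          rw [← hp.2, show p.1 + (p.1 + p.2) = (p.1 + p.1) + p.2 by ring,
            vec_add_self, zero_add]
        have e2 : q.2 = q.1 + a := by
          rw [← hq.2, show q.1 + (q.1 + q.2) = (q.1 + q.1) + q.2 by ring,
            vec_add_self, zero_add]
        rw [e1, e2, hpq]
      exact Prod.ext hpq h2
    · intro x hx
      simp only [Finset.mem_filter, Finset.mem_univ, true_and] at hx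
      refine ⟨(x, x + a), ?_, rfl⟩
      simp only [Finset.mem_filter, Finset.mem_product]
      refine ⟨⟨hx.1, hx.2⟩, ?_⟩
      rw [show x + (x + a) = (x + x) + a by ring, vec_add_self, zero_add]
  have hle : (2:ℕ)^(n-1) ≤ 2^(2*n-2) := Nat.pow_le_pow_right (by norm_num) (by omega)
  have hcast : (((2:ℕ)^(2*n-2) - 2^(n-1) : ℕ) : ℝ) = 2^(2*n-2) - 2^(n-1) := by
    rw [Nat.cast_sub hle]; push_cast; ring
  rw [hbij]
  have : ((#(Finset.univ.filter (fun x : Fin (2 * n) → ZMod 2 => x ∈ D ∧ x + a ∈ D)) : ℕ) : ℝ)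
      = (((2:ℕ) ^ (2 * n - 2) - 2 ^ (n - 1) : ℕ) : ℝ) := hE.trans hcast.symm
  exact_mod_cast this
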